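/- For every metric continuum Z and all nonempty closed sets a, b, c ⊆ Z with a ∩ b ∩ c = ∅, there exist a metric continuum Z′, a continuous surjection g : Z′ → Z that is closed and monotone (i.e., g is a closed map and g⁻¹({z}) is connected for every z ∈ Z), and closed sets x, y, z ⊆ Z′ such that g⁻¹(a) ⊆ x, g⁻¹(b) ⊆ y, g⁻¹(c) ⊆ z, x ∩ y ∩ z = ∅ and x ∪ y ∪ z = Z′. -/

import Mathlib

open Metric Set

namespace MonotonePreimageCoverAux

/-- The boundary of the standard 2-simplex in `Fin 3 → ℝ`. -/
def bset : Set (Fin 3 → ℝ) :=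
  {s | 0 ≤ s 0 ∧ 0 ≤ s 1 ∧ 0 ≤ s 2 ∧ s 0 + s 1 + s 2 = 1 ∧ (s 0 = 0 ∨ s 1 = 0 ∨ s 2 = 0)}

lemma isClosed_bset : IsClosed bset := by
  have h0 : Continuous fun s : Fin 3 → ℝ => s 0 := continuous_apply 0
  have h1 : Continuous fun s : Fin 3 → ℝ => s 1 := continuous_apply 1
  have h2 : Continuous fun s : Fin 3 → ℝ => s 2 := continuous_apply 2
  have he : bset = ({s : Fin 3 → ℝ | 0 ≤ s 0} ∩ ({s | 0 ≤ s 1} ∩ ({s | 0 ≤ s 2} ∩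
      ({s | s 0 + s 1 + s 2 = 1} ∩ (({s | s 0 = 0} ∪ {s | s 1 = 0}) ∪ {s | s 2 = 0}))))) := by
    ext s
    simp only [bset, mem_setOf_eq, mem_inter_iff, mem_union]
    tauto
  rw [he]
  exact (isClosed_le continuous_const h0).inter ((isClosed_le continuous_const h1).inter
    ((isClosed_le continuous_const h2).inter
      ((isClosed_eq ((h0.add h1).add h2) continuous_const).inter
        (((isClosed_eq h0 continuous_const).union (isClosed_eq h1 continuous_const)).union
          (isClosed_eq h2 continuous_const)))))

lemma face_convex (i : Fin 3) :
    Convex ℝ {s : Fin 3 → ℝ | 0 ≤ s 0 ∧ 0 ≤ s 1 ∧ 0 ≤ s 2 ∧ s 0 + s 1 + s 2 = 1 ∧ s i = 0} := by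
  intro x hx y hy p q hp hq hpq
  obtain ⟨x0, x1, x2, xs, xe⟩ := hx
  obtain ⟨y0, y1, y2, ys, ye⟩ := hy
  simp only [mem_setOf_eq, Pi.add_apply, Pi.smul_apply, smul_eq_mul]
  refine ⟨by nlinarith, by nlinarith, by nlinarith, by nlinarith, by nlinarith⟩

lemma isConnected_bset : IsConnected bset := by
  set F0 : Set (Fin 3 → ℝ) :=
    {s | 0 ≤ s 0 ∧ 0 ≤ s 1 ∧ 0 ≤ s 2 ∧ s 0 + s 1 + s 2 = 1 ∧ s 0 = 0} with hF0
  set F1 : Set (Fin 3 → ℝ) :=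
    {s | 0 ≤ s 0 ∧ 0 ≤ s 1 ∧ 0 ≤ s 2 ∧ s 0 + s 1 + s 2 = 1 ∧ s 1 = 0} with hF1
  set F2 : Set (Fin 3 → ℝ) :=
    {s | 0 ≤ s 0 ∧ 0 ≤ s 1 ∧ 0 ≤ s 2 ∧ s 0 + s 1 + s 2 = 1 ∧ s 2 = 0} with hF2
  have m010 : (![0,1,0] : Fin 3 → ℝ) ∈ F0 ∩ F2 := by
    constructor <;> refine ⟨by norm_num, by norm_num, by norm_num [Matrix.cons_val_two, Matrix.vecHead, Matrix.vecTail], by norm_num [Matrix.cons_val_two, Matrix.vecHead, Matrix.vecTail], by norm_num [Matrix.cons_val_two, Matrix.vecHead, Matrix.vecTail]⟩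
  have m001 : (![0,0,1] : Fin 3 → ℝ) ∈ F0 ∩ F1 := by
    constructor <;> refine ⟨by norm_num, by norm_num, by norm_num [Matrix.cons_val_two, Matrix.vecHead, Matrix.vecTail], by norm_num [Matrix.cons_val_two, Matrix.vecHead, Matrix.vecTail], by norm_num [Matrix.cons_val_two, Matrix.vecHead, Matrix.vecTail]⟩
  have hc0 : IsConnected F0 := ⟨⟨_, m010.1⟩, (face_convex 0).isPreconnected⟩
  have hc1 : IsConnected F1 := ⟨⟨_, m001.2⟩, (face_convex 1).isPreconnected⟩
  have hc2 : IsConnected F2 := ⟨⟨_, m010.2⟩, (face_convex 2).isPreconnected⟩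
  have h01 : IsConnected (F0 ∪ F1) := IsConnected.union ⟨_, m001⟩ hc0 hc1
  have h012 : IsConnected ((F0 ∪ F1) ∪ F2) :=
    IsConnected.union ⟨![0,1,0], Or.inl m010.1, m010.2⟩ h01 hc2
  have he : bset = (F0 ∪ F1) ∪ F2 := by
    ext s
    simp only [bset, hF0, hF1, hF2, mem_setOf_eq, mem_union]
    tauto
  rw [he]
  exact h012

lemma bset_subset_Icc : bset ⊆ Icc (0 : Fin 3 → ℝ) 1 := by
  rintro s ⟨h0, h1, h2, hsum, -⟩
  constructor
  · intro i
    fin_cases i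
    · exact h0
    · exact h1
    · exact h2
  · intro i
    fin_cases i
    · show s 0 ≤ (1:ℝ); linarith
    · show s 1 ≤ (1:ℝ); linarith
    · show s 2 ≤ (1:ℝ); linarith

variable {Z : Type*} [MetricSpace Z]

noncomputable def SS (a b c : Set Z) (z : Z) : ℝ :=
  infDist z a + infDist z b + infDist z c

noncomputable def ua (a b c : Set Z) (z : Z) : ℝ := infDist z a / SS a b c z

noncomputable def ub (a b c : Set Z) (z : Z) : ℝ := infDist z b / SS a b c z

noncomputable def uc (a b c : Set Z) (z : Z) : ℝ := infDist z c / SS a b c z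

noncomputable def tmin (a b c : Set Z) (z : Z) : ℝ :=
  min (min (ua a b c z) (ub a b c z)) (uc a b c z)

/-- The blow-up of `Z`: pairs `(z, s)` with `s` in the boundary of the simplex such that
the normalized distance vector of `z` lies on the segment from the barycenter to `s`. -/
noncomputable def Pset (a b c : Set Z) : Set (Z × (Fin 3 → ℝ)) :=
  {p | p.2 ∈ bset ∧
    ua a b c p.1 = tmin a b c p.1 + (1 - 3 * tmin a b c p.1) * p.2 0 ∧
    ub a b c p.1 = tmin a b c p.1 + (1 - 3 * tmin a b c p.1) * p.2 1 ∧
    uc a b c p.1 = tmin a b c p.1 + (1 - 3 * tmin a b c p.1) * p.2 2}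

section Lemmas

variable (a b c : Set Z)

lemma SS_pos (ha : IsClosed a) (hb : IsClosed b) (hc : IsClosed c) (hane : a.Nonempty)
    (hbne : b.Nonempty) (hcne : c.Nonempty) (habc : a ∩ b ∩ c = ∅) (z : Z) :
    0 < SS a b c z := by
  have h1 : 0 ≤ infDist z a := infDist_nonneg
  have h2 : 0 ≤ infDist z b := infDist_nonneg
  have h3 : 0 ≤ infDist z c := infDist_nonneg
  rcases lt_or_eq_of_le (show (0:ℝ) ≤ SS a b c z by unfold SS; linarith) with h | h
  · exact h
  · exfalso
    have hz : z ∈ a ∩ b ∩ c := by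
      unfold SS at h
      refine ⟨⟨?_, ?_⟩, ?_⟩
      · exact (ha.mem_iff_infDist_zero hane).mpr (by linarith)
      · exact (hb.mem_iff_infDist_zero hbne).mpr (by linarith)
      · exact (hc.mem_iff_infDist_zero hcne).mpr (by linarith)
    rw [habc] at hz
    exact hz

variable (hS : ∀ z, 0 < SS a b c z)
include hS

lemma ua_nonneg (z : Z) : 0 ≤ ua a b c z := div_nonneg infDist_nonneg (hS z).le

lemma ub_nonneg (z : Z) : 0 ≤ ub a b c z := div_nonneg infDist_nonneg (hS z).le

lemma uc_nonneg (z : Z) : 0 ≤ uc a b c z := div_nonneg infDist_nonneg (hS z).le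

lemma u_sum (z : Z) : ua a b c z + ub a b c z + uc a b c z = 1 := by
  unfold ua ub uc
  rw [← add_div, ← add_div]
  exact div_self (hS z).ne'

omit hS

lemma tmin_le_ua (z : Z) : tmin a b c z ≤ ua a b c z :=
  le_trans (min_le_left _ _) (min_le_left _ _)

lemma tmin_le_ub (z : Z) : tmin a b c z ≤ ub a b c z :=
  le_trans (min_le_left _ _) (min_le_right _ _)

lemma tmin_le_uc (z : Z) : tmin a b c z ≤ uc a b c z := min_le_right _ _

lemma tmin_eq (z : Z) :
    tmin a b c z = ua a b c z ∨ tmin a b c z = ub a b c z ∨ tmin a b c z = uc a b c z := by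
  unfold tmin
  rcases min_choice (min (ua a b c z) (ub a b c z)) (uc a b c z) with h | h
  · rcases min_choice (ua a b c z) (ub a b c z) with h' | h'
    · exact Or.inl (by rw [h, h'])
    · exact Or.inr (Or.inl (by rw [h, h']))
  · exact Or.inr (Or.inr h)

include hS

lemma tmin_nonneg (z : Z) : 0 ≤ tmin a b c z :=
  le_min (le_min (ua_nonneg a b c hS z) (ub_nonneg a b c hS z)) (uc_nonneg a b c hS z)

lemma tmin_le_third (z : Z) : tmin a b c z ≤ 1 / 3 := by
  have := u_sum a b c hS z
  have h1 := tmin_le_ua a b c z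
  have h2 := tmin_le_ub a b c z
  have h3 := tmin_le_uc a b c z
  linarith

lemma u_eq_third (z : Z) (h : tmin a b c z = 1 / 3) :
    ua a b c z = 1 / 3 ∧ ub a b c z = 1 / 3 ∧ uc a b c z = 1 / 3 := by
  have hsum := u_sum a b c hS z
  have h1 := tmin_le_ua a b c z
  have h2 := tmin_le_ub a b c z
  have h3 := tmin_le_uc a b c z
  refine ⟨by linarith, by linarith, by linarith⟩

omit hS

lemma continuous_SS : Continuous (SS a b c) :=
  ((continuous_infDist_pt a).add (continuous_infDist_pt b)).add (continuous_infDist_pt c)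

include hS

lemma continuous_ua : Continuous (ua a b c) :=
  (continuous_infDist_pt a).div (continuous_SS a b c) fun z => (hS z).ne'

lemma continuous_ub : Continuous (ub a b c) :=
  (continuous_infDist_pt b).div (continuous_SS a b c) fun z => (hS z).ne'

lemma continuous_uc : Continuous (uc a b c) :=
  (continuous_infDist_pt c).div (continuous_SS a b c) fun z => (hS z).ne'

lemma continuous_tmin : Continuous (tmin a b c) :=
  ((continuous_ua a b c hS).min (continuous_ub a b c hS)).min (continuous_uc a b c hS)

lemma isClosed_Pset : IsClosed (Pset a b c) := by
  have ht : Continuous fun p : Z × (Fin 3 → ℝ) => tmin a b c p.1 :=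
    (continuous_tmin a b c hS).comp continuous_fst
  have hco : ∀ i : Fin 3, Continuous fun p : Z × (Fin 3 → ℝ) =>
      tmin a b c p.1 + (1 - 3 * tmin a b c p.1) * p.2 i := fun i =>
    ht.add ((continuous_const.sub (continuous_const.mul ht)).mul
      ((continuous_apply i).comp continuous_snd))
  have he : Pset a b c = (Prod.snd ⁻¹' bset) ∩
      ({p : Z × (Fin 3 → ℝ) | ua a b c p.1 = tmin a b c p.1 + (1 - 3 * tmin a b c p.1) * p.2 0} ∩
       ({p | ub a b c p.1 = tmin a b c p.1 + (1 - 3 * tmin a b c p.1) * p.2 1} ∩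
        {p | uc a b c p.1 = tmin a b c p.1 + (1 - 3 * tmin a b c p.1) * p.2 2})) := rfl
  rw [he]
  exact (isClosed_bset.preimage continuous_snd).inter
    ((isClosed_eq ((continuous_ua a b c hS).comp continuous_fst) (hco 0)).inter
      ((isClosed_eq ((continuous_ub a b c hS).comp continuous_fst) (hco 1)).inter
        (isClosed_eq ((continuous_uc a b c hS).comp continuous_fst) (hco 2))))

lemma isCompact_Pset [CompactSpace Z] : IsCompact (Pset a b c) := by
  refine IsCompact.of_isClosed_subset
    (isCompact_univ.prod (isCompact_Icc (a := (0 : Fin 3 → ℝ)) (b := 1)))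
    (isClosed_Pset a b c hS) ?_
  rintro ⟨z, s⟩ hp
  exact ⟨trivial, bset_subset_Icc hp.1⟩

lemma exists_mem_fiber (z : Z) : ∃ s, (z, s) ∈ Pset a b c := by
  rcases (tmin_le_third a b c hS z).lt_or_eq with h | h
  · -- unique point fiber
    have hd : (0:ℝ) < 1 - 3 * tmin a b c z := by linarith
    refine ⟨![(ua a b c z - tmin a b c z) / (1 - 3 * tmin a b c z),
              (ub a b c z - tmin a b c z) / (1 - 3 * tmin a b c z),
              (uc a b c z - tmin a b c z) / (1 - 3 * tmin a b c z)], ?_, ?_, ?_, ?_⟩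
    · refine ⟨?_, ?_, ?_, ?_, ?_⟩
      · simpa using div_nonneg (sub_nonneg.mpr (tmin_le_ua a b c z)) hd.le
      · simpa using div_nonneg (sub_nonneg.mpr (tmin_le_ub a b c z)) hd.le
      · simpa using div_nonneg (sub_nonneg.mpr (tmin_le_uc a b c z)) hd.le
      · have hsum := u_sum a b c hS z
        show (ua a b c z - tmin a b c z) / (1 - 3 * tmin a b c z) +
            (ub a b c z - tmin a b c z) / (1 - 3 * tmin a b c z) +
            (uc a b c z - tmin a b c z) / (1 - 3 * tmin a b c z) = 1
        rw [← add_div, ← add_div]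
        rw [div_eq_one_iff_eq hd.ne']
        ring_nf
        linarith
      · rcases tmin_eq a b c z with he | he | he
        · exact Or.inl (by simp [he.symm])
        · exact Or.inr (Or.inl (by simp [he.symm]))
        · exact Or.inr (Or.inr (by simp [he.symm]))
    · show ua a b c z = tmin a b c z +
        (1 - 3 * tmin a b c z) * ((ua a b c z - tmin a b c z) / (1 - 3 * tmin a b c z))
      rw [mul_div_cancel₀ _ hd.ne']; ring
    · show ub a b c z = tmin a b c z +
        (1 - 3 * tmin a b c z) * ((ub a b c z - tmin a b c z) / (1 - 3 * tmin a b c z))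
      rw [mul_div_cancel₀ _ hd.ne']; ring
    · show uc a b c z = tmin a b c z +
        (1 - 3 * tmin a b c z) * ((uc a b c z - tmin a b c z) / (1 - 3 * tmin a b c z))
      rw [mul_div_cancel₀ _ hd.ne']; ring
  · obtain ⟨h1, h2, h3⟩ := u_eq_third a b c hS z h
    refine ⟨![1, 0, 0], ⟨by norm_num, by norm_num, by norm_num [Matrix.cons_val_two, Matrix.vecHead, Matrix.vecTail], by norm_num [Matrix.cons_val_two, Matrix.vecHead, Matrix.vecTail], by norm_num [Matrix.cons_val_two, Matrix.vecHead, Matrix.vecTail]⟩,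
      ?_, ?_, ?_⟩
    · show ua a b c z = tmin a b c z + (1 - 3 * tmin a b c z) * (1:ℝ)
      rw [h1, h]; norm_num
    · show ub a b c z = tmin a b c z + (1 - 3 * tmin a b c z) * (0:ℝ)
      rw [h2, h]; norm_num
    · show uc a b c z = tmin a b c z + (1 - 3 * tmin a b c z) * (0:ℝ)
      rw [h3, h]; norm_num

omit hS

lemma fiber_unique (z : Z) (h : tmin a b c z < 1 / 3) {s s' : Fin 3 → ℝ}
    (hs : (z, s) ∈ Pset a b c) (hs' : (z, s') ∈ Pset a b c) : s = s' := by
  have hd : (1 - 3 * tmin a b c z) ≠ 0 := by intro h0; rw [sub_eq_zero] at h0; linarith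
  obtain ⟨-, e0, e1, e2⟩ := hs
  obtain ⟨-, e0', e1', e2'⟩ := hs'
  dsimp only at e0 e1 e2 e0' e1' e2'
  funext i
  fin_cases i
  · show s 0 = s' 0
    exact mul_left_cancel₀ hd (by linarith)
  · show s 1 = s' 1
    exact mul_left_cancel₀ hd (by linarith)
  · show s 2 = s' 2
    exact mul_left_cancel₀ hd (by linarith)

include hS

lemma fiber_full (z : Z) (h : tmin a b c z = 1 / 3) (s : Fin 3 → ℝ) :
    (z, s) ∈ Pset a b c ↔ s ∈ bset := by
  obtain ⟨h1, h2, h3⟩ := u_eq_third a b c hS z h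
  constructor
  · exact fun hp => hp.1
  · intro hsb
    refine ⟨hsb, ?_, ?_, ?_⟩
    · rw [h1, h]; ring
    · rw [h2, h]; ring
    · rw [h3, h]; ring

end Lemmas

end MonotonePreimageCoverAux

open MonotonePreimageCoverAux in
private theorem exists_monotone_preimage_cover_aux (Z : Type) [MetricSpace Z] [CompactSpace Z]
    [ConnectedSpace Z] (a b c : Set Z) (ha : IsClosed a) (hb : IsClosed b)
    (hc : IsClosed c) (hane : a.Nonempty) (hbne : b.Nonempty) (hcne : c.Nonempty)
    (habc : a ∩ b ∩ c = ∅) :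
    ∃ (Z' : Type) (_ : MetricSpace Z'), CompactSpace Z' ∧ ConnectedSpace Z' ∧
      ∃ g : Z' → Z, Continuous g ∧ Function.Surjective g ∧ IsClosedMap g ∧
        (∀ z : Z, IsConnected (g ⁻¹' {z})) ∧
        ∃ x y z : Set Z', IsClosed x ∧ IsClosed y ∧ IsClosed z ∧
          g ⁻¹' a ⊆ x ∧ g ⁻¹' b ⊆ y ∧ g ⁻¹' c ⊆ z ∧
          x ∩ y ∩ z = ∅ ∧ x ∪ y ∪ z = Set.univ := by
  have hS : ∀ z, 0 < SS a b c z := SS_pos a b c ha hb hc hane hbne hcne habc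
  haveI hcomp : CompactSpace ↥(Pset a b c) :=
    isCompact_iff_compactSpace.mp (isCompact_Pset a b c hS)
  set g : ↥(Pset a b c) → Z := fun p => p.1.1 with hg
  have hgc : Continuous g := continuous_fst.comp continuous_subtype_val
  have hgs : Function.Surjective g := by
    intro z
    obtain ⟨s, hs⟩ := exists_mem_fiber a b c hS z
    exact ⟨⟨(z, s), hs⟩, rfl⟩
  have hmemz : ∀ (z : Z) (p : ↥(Pset a b c)), g p = z → (z, p.1.2) ∈ Pset a b c := by
    intro z p hp
    have h2 := p.2
    rwa [show p.1 = (z, p.1.2) from Prod.ext hp rfl] at h2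
  have hfib : ∀ z : Z, IsConnected (g ⁻¹' {z}) := by
    intro z
    rcases (tmin_le_third a b c hS z).lt_or_eq with h | h
    · obtain ⟨s0, hs0⟩ := exists_mem_fiber a b c hS z
      have he : g ⁻¹' {z} = {⟨(z, s0), hs0⟩} := by
        ext p
        simp only [mem_preimage, mem_singleton_iff]
        constructor
        · intro hp
          have huniq := fiber_unique a b c z h (hmemz z p hp) hs0
          exact Subtype.ext (Prod.ext hp huniq)
        · rintro rfl; rfl
      rw [he]
      exact isConnected_singleton
    · have hiff := fiber_full a b c hS z h
      haveI : ConnectedSpace ↥bset := Subtype.connectedSpace isConnected_bset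
      set φ : ↥bset → ↥(Pset a b c) := fun s => ⟨(z, s.1), (hiff s.1).mpr s.2⟩ with hφ
      have hφc : Continuous φ :=
        Continuous.subtype_mk (continuous_const.prodMk continuous_subtype_val) _
      have he : g ⁻¹' {z} = Set.range φ := by
        ext p
        simp only [mem_preimage, mem_singleton_iff, mem_range]
        constructor
        · intro hp
          exact ⟨⟨p.1.2, (hiff p.1.2).mp (hmemz z p hp)⟩,
            Subtype.ext (Prod.ext hp.symm rfl)⟩
        · rintro ⟨s, rfl⟩; rfl
      rw [he]
      exact isConnected_range hφc
  have hgcl : IsClosedMap g := hgc.isClosedMap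
  haveI hne' : Nonempty ↥(Pset a b c) := by
    obtain ⟨z0⟩ : Nonempty Z := inferInstance
    obtain ⟨p, -⟩ := hgs z0
    exact ⟨p⟩
  haveI hpre : PreconnectedSpace ↥(Pset a b c) := by
    constructor
    rw [isPreconnected_closed_iff]
    rintro t t' ht ht' hcov ⟨p, -, hpt⟩ ⟨q, -, hqt'⟩
    by_contra hne
    rw [Set.not_nonempty_iff_eq_empty] at hne
    have hdisj : ∀ r : ↥(Pset a b c), ¬(r ∈ t ∧ r ∈ t') := by
      intro r hr
      have : r ∈ (univ : Set ↥(Pset a b c)) ∩ (t ∩ t') := ⟨trivial, hr.1, hr.2⟩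
      rw [hne] at this
      exact this
    have hfibsub : ∀ z : Z, g ⁻¹' {z} ⊆ t ∨ g ⁻¹' {z} ⊆ t' := by
      intro z
      by_contra hcon
      push_neg at hcon
      obtain ⟨hnt, hnt'⟩ := hcon
      obtain ⟨p1, hp1, hp1t⟩ := not_subset.mp hnt
      obtain ⟨p2, hp2, hp2t'⟩ := not_subset.mp hnt'
      have h1 : p1 ∈ t' := (hcov (mem_univ p1)).resolve_left hp1t
      have h2 : p2 ∈ t := (hcov (mem_univ p2)).resolve_right hp2t'
      obtain ⟨x, -, hx⟩ := isPreconnected_closed_iff.mp (hfib z).isPreconnected t t' ht ht'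
        (fun r _ => hcov (mem_univ r)) ⟨p2, hp2, h2⟩ ⟨p1, hp1, h1⟩
      exact hdisj x hx
    have himt : IsClosed (g '' t) := hgcl t ht
    have himt' : IsClosed (g '' t') := hgcl t' ht'
    have hcov' : (univ : Set Z) ⊆ g '' t ∪ g '' t' := by
      intro z _
      obtain ⟨r, hr⟩ := hgs z
      rcases hcov (mem_univ r) with h | h
      · exact Or.inl ⟨r, h, hr⟩
      · exact Or.inr ⟨r, h, hr⟩
    obtain ⟨z, -, ⟨p1, hp1t, hp1⟩, ⟨p2, hp2t', hp2⟩⟩ :=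
      isPreconnected_closed_iff.mp (isPreconnected_univ : IsPreconnected (univ : Set Z))
        (g '' t) (g '' t') himt himt' hcov' ⟨g p, trivial, ⟨p, hpt, rfl⟩⟩
        ⟨g q, trivial, ⟨q, hqt', rfl⟩⟩
    rcases hfibsub z with h | h
    · exact hdisj p2 ⟨h hp2, hp2t'⟩
    · exact hdisj p1 ⟨hp1t, h hp1⟩
  haveI hconn : ConnectedSpace ↥(Pset a b c) := ⟨hne'⟩
  refine ⟨↥(Pset a b c), inferInstance, hcomp, hconn, g, hgc, hgs, hgcl, hfib,
    {p | p.1.2 0 = 0}, {p | p.1.2 1 = 0}, {p | p.1.2 2 = 0}, ?_, ?_, ?_, ?_, ?_, ?_, ?_, ?_⟩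
  · exact isClosed_eq ((continuous_apply 0).comp (continuous_snd.comp continuous_subtype_val))
      continuous_const
  · exact isClosed_eq ((continuous_apply 1).comp (continuous_snd.comp continuous_subtype_val))
      continuous_const
  · exact isClosed_eq ((continuous_apply 2).comp (continuous_snd.comp continuous_subtype_val))
      continuous_const
  · -- g ⁻¹' a ⊆ x
    intro p hp
    have h1 : ua a b c (g p) = 0 := by
      unfold ua
      rw [infDist_zero_of_mem (show g p ∈ a from hp), zero_div]
    have ht0 : tmin a b c (g p) = 0 :=
      le_antisymm (h1 ▸ tmin_le_ua a b c (g p)) (tmin_nonneg a b c hS (g p))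
    obtain ⟨-, e0, -, -⟩ := hmemz (g p) p rfl
    rw [h1, ht0] at e0
    show p.1.2 0 = 0
    linarith
  · intro p hp
    have h1 : ub a b c (g p) = 0 := by
      unfold ub
      rw [infDist_zero_of_mem (show g p ∈ b from hp), zero_div]
    have ht0 : tmin a b c (g p) = 0 :=
      le_antisymm (h1 ▸ tmin_le_ub a b c (g p)) (tmin_nonneg a b c hS (g p))
    obtain ⟨-, -, e1, -⟩ := hmemz (g p) p rfl
    rw [h1, ht0] at e1
    show p.1.2 1 = 0
    linarith
  · intro p hp
    have h1 : uc a b c (g p) = 0 := by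
      unfold uc
      rw [infDist_zero_of_mem (show g p ∈ c from hp), zero_div]
    have ht0 : tmin a b c (g p) = 0 :=
      le_antisymm (h1 ▸ tmin_le_uc a b c (g p)) (tmin_nonneg a b c hS (g p))
    obtain ⟨-, -, -, e2⟩ := hmemz (g p) p rfl
    rw [h1, ht0] at e2
    show p.1.2 2 = 0
    linarith
  · rw [Set.eq_empty_iff_forall_notMem]
    rintro p ⟨⟨h0, h1⟩, h2⟩
    obtain ⟨-, -, -, hsum, -⟩ := p.2.1
    simp only [mem_setOf_eq] at h0 h1 h2
    rw [h0, h1, h2] at hsum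
    norm_num at hsum
  · rw [Set.eq_univ_iff_forall]
    intro p
    rcases p.2.1.2.2.2.2 with h | h | h
    · exact Or.inl (Or.inl h)
    · exact Or.inl (Or.inr h)
    · exact Or.inr h

set_option synthInstance.maxHeartbeats 1000000 in
set_option maxHeartbeats 1000000 in
/-- For every metric continuum `Z` and nonempty closed sets `a, b, c` with empty
intersection, there is a closed monotone continuous surjection `g` from a metric
continuum `Z′` onto `Z` such that the preimages of `a`, `b`, `c` can be enlarged
to a closed cover of `Z′` by three sets with empty intersection. -/
theorem exists_monotone_preimage_cover (Z : Type*) [MetricSpace Z] [CompactSpace Z]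
    [ConnectedSpace Z] (a b c : Set Z) (ha : IsClosed a) (hb : IsClosed b)
    (hc : IsClosed c) (hane : a.Nonempty) (hbne : b.Nonempty) (hcne : c.Nonempty)
    (habc : a ∩ b ∩ c = ∅) :
    ∃ (Z' : Type) (_ : MetricSpace Z'), CompactSpace Z' ∧ ConnectedSpace Z' ∧
      ∃ g : Z' → Z, Continuous g ∧ Function.Surjective g ∧ IsClosedMap g ∧
        (∀ z : Z, IsConnected (g ⁻¹' {z})) ∧
        ∃ x y z : Set Z', IsClosed x ∧ IsClosed y ∧ IsClosed z ∧
          g ⁻¹' a ⊆ x ∧ g ⁻¹' b ⊆ y ∧ g ⁻¹' c ⊆ z ∧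
          x ∩ y ∩ z = ∅ ∧ x ∪ y ∪ z = Set.univ := by
  -- transfer to an isometric copy of `Z` living in `Type 0` via the Kuratowski embedding
  have hiso := kuratowskiEmbedding.isometry Z
  set W : Set (lp (fun _ : ℕ => ℝ) ⊤) := Set.range (kuratowskiEmbedding Z) with hW
  let h : Z ≃ₜ ↥W := hiso.isometryEquivOnRange.toHomeomorph
  haveI : CompactSpace ↥W := isCompact_iff_compactSpace.mp (isCompact_range hiso.continuous)
  haveI : ConnectedSpace ↥W := Subtype.connectedSpace (isConnected_range hiso.continuous)
  have himg : ∀ (s : Set Z), IsClosed s → IsClosed (h '' s) := fun s hs =>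
    (hs.isCompact.image h.continuous).isClosed
  have hinter : (h '' a) ∩ (h '' b) ∩ (h '' c) = ∅ := by
    rw [← Set.image_inter h.injective, ← Set.image_inter h.injective, habc, Set.image_empty]
  obtain ⟨Z', inst, hcomp, hconn, g₀, hg₀c, hg₀s, hg₀cl, hg₀fib, x, y, zs, hx, hy, hz,
      hxa, hyb, hzc, hxyz, hcover⟩ :=
    exists_monotone_preimage_cover_aux (↥W) (h '' a) (h '' b) (h '' c)
      (himg a ha) (himg b hb) (himg c hc) (hane.image h) (hbne.image h) (hcne.image h) hinter
  have key : ∀ s : Set Z, (fun p => h.symm (g₀ p)) ⁻¹' s = g₀ ⁻¹' (h '' s) := by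
    intro s
    rw [show h '' s = h.toEquiv '' s from rfl, Equiv.image_eq_preimage_symm]
    rfl
  refine ⟨Z', inst, hcomp, hconn, fun p => h.symm (g₀ p), h.symm.continuous.comp hg₀c,
    h.symm.surjective.comp hg₀s, h.symm.isClosedMap.comp hg₀cl, ?_, x, y, zs, hx, hy, hz,
    ?_, ?_, ?_, hxyz, hcover⟩
  · intro z
    have he : (fun p => h.symm (g₀ p)) ⁻¹' {z} = g₀ ⁻¹' {h z} := by
      ext p
      simp only [mem_preimage, mem_singleton_iff]
      constructor
      · rintro rfl
        exact (h.apply_symm_apply _).symm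
      · intro hh
        rw [hh]
        exact h.symm_apply_apply _
    rw [he]
    exact hg₀fib (h z)
  · rw [key a]; exact hxa
  · rw [key b]; exact hyb
  · rw [key c]; exact hzc
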